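/- Let N_α = det_{1≤i,j≤n}(x_i^{α_j} + x_i^{-α_j}) for α = (α_1,...,α_n) ∈ ℕ^n, and let p̄_r = Σ_{i=1}^n (x_i^r + x_i^{-r}). Then p̄_r · N_α = Σ_{j=1}^n N_{α + r·ε_j} + Σ_{j=1}^n N_{α - r·ε_j}. -/
import Mathlib


open scoped BigOperators

noncomputable section

/-- The field of rational functions in `n` variables over `ℚ`; the variables
`x_i` are invertible there, so Laurent expressions make sense. -/
abbrev K (n : ℕ) := FractionRing (MvPolynomial (Fin n) ℚ)

/-- The variables `x_i`. -/
def X {n : ℕ} (i : Fin n) : K n :=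
  algebraMap (MvPolynomial (Fin n) ℚ) (K n) (MvPolynomial.X i)

/-- `N_α = det(x_i^{α_j} + x_i^{-α_j})`. -/
def N (n : ℕ) (α : Fin n → ℤ) : K n :=
  Matrix.det (Matrix.of fun i j : Fin n => X i ^ (α j) + X i ^ (-(α j)))

lemma X_ne_zero {n : ℕ} (i : Fin n) : X i ≠ 0 := by
  simp [X, IsFractionRing.to_map_eq_zero_iff, MvPolynomial.X_ne_zero]

/-- Key multilinearity fact: summing over columns the determinants of the matrix
with column `j` multiplied entrywise by `c i` gives `(∑ c) * det M`. -/
lemma sum_det_updateCol_mul {m : ℕ} (M : Matrix (Fin m) (Fin m) (K m))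
    (c : Fin m → K m) :
    ∑ j, (M.updateCol j (fun i => c i * M i j)).det = (∑ i, c i) * M.det := by
  have hterm : ∀ (j : Fin m) (σ : Equiv.Perm (Fin m)),
      (∏ i, (M.updateCol j (fun i => c i * M i j)) (σ i) i)
        = c (σ j) * ∏ i, M (σ i) i := by
    intro j σ
    rw [show (∏ i, (M.updateCol j (fun i => c i * M i j)) (σ i) i)
        = ∏ i, (if i = j then c (σ i) * M (σ i) i else M (σ i) i) from
      Finset.prod_congr rfl (fun i _ => by
        by_cases h : i = j <;> simp [Matrix.updateCol_apply, h])]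
    have hsplit : ∀ f : Fin m → K m,
        ∏ i, f i = f j * ∏ i ∈ Finset.univ.erase j, f i := fun f =>
      (Finset.mul_prod_erase _ f (Finset.mem_univ j)).symm
    rw [hsplit (fun i => if i = j then c (σ i) * M (σ i) i else M (σ i) i),
      hsplit (fun i => M (σ i) i)]
    simp only [eq_self_iff_true, if_true]
    rw [mul_assoc]
    congr 2
    refine Finset.prod_congr rfl fun i hi => ?_
    rw [if_neg (Finset.ne_of_mem_erase hi)]
  simp only [Matrix.det_apply, hterm]
  rw [Finset.sum_comm]
  simp only [← Finset.smul_sum, ← Finset.sum_mul]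
  rw [Finset.mul_sum]
  refine Finset.sum_congr rfl fun σ _ => ?_
  rw [Equiv.sum_comp σ c, mul_smul_comm]

lemma mul_entry {m : ℕ} (i : Fin m) (a r : ℤ) :
    (X i ^ r + X i ^ (-r)) * (X i ^ a + X i ^ (-a)) =
      (X i ^ (a + r) + X i ^ (-(a + r))) + (X i ^ (a - r) + X i ^ (-(a - r))) := by
  have hx := X_ne_zero i
  simp only [neg_add, neg_sub, sub_eq_add_neg, zpow_add₀ hx, zpow_neg]
  field_simp
  ring

/-- Replacing column `j` of the `N`-matrix by the column for exponent `v`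
gives the `N`-matrix of the updated exponent vector. -/
lemma det_updateCol_N {m : ℕ} (β : Fin m → ℤ) (j : Fin m) (v : ℤ) :
    ((Matrix.of fun i k : Fin m => X i ^ (β k) + X i ^ (-(β k))).updateCol j
      (fun i => X i ^ v + X i ^ (-v))).det = N m (Function.update β j v) := by
  have : (Matrix.of fun i k : Fin m => X i ^ (β k) + X i ^ (-(β k))).updateCol j
      (fun i => X i ^ v + X i ^ (-v)) =
      Matrix.of (fun i k : Fin m => X i ^ (Function.update β j v k) +
        X i ^ (-(Function.update β j v k))) := by
    ext i k
    by_cases h : k = j <;> simp [Matrix.updateCol_apply, Function.update, h]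
  rw [this, N]

/-- `p̄_r N_α = Σ_j N_{α + r ε_j} + Σ_j N_{α - r ε_j}`. -/
theorem pbar_mul_N (n : ℕ) (α : Fin n → ℕ) (r : ℤ) (hr : 1 ≤ r) :
    (∑ i : Fin n, (X i ^ r + X i ^ (-r))) * N n (fun j => (α j : ℤ)) =
      (∑ j : Fin n, N n (Function.update (fun k => (α k : ℤ)) j ((α j : ℤ) + r))) +
        ∑ j : Fin n, N n (Function.update (fun k => (α k : ℤ)) j ((α j : ℤ) - r)) := by
  have key : ∀ j : Fin n,
      ((Matrix.of fun i k : Fin n => X i ^ ((α k : ℤ)) + X i ^ (-(α k : ℤ))).updateCol j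
        (fun i => (X i ^ r + X i ^ (-r)) *
          (Matrix.of fun i k : Fin n => X i ^ ((α k : ℤ)) + X i ^ (-(α k : ℤ))) i j)).det =
        N n (Function.update (fun k => (α k : ℤ)) j ((α j : ℤ) + r)) +
          N n (Function.update (fun k => (α k : ℤ)) j ((α j : ℤ) - r)) := by
    intro j
    have hcol : (fun i => (X i ^ r + X i ^ (-r)) *
        (Matrix.of fun i k : Fin n => X i ^ ((α k : ℤ)) + X i ^ (-(α k : ℤ))) i j) =
        (fun i : Fin n => X i ^ ((α j : ℤ) + r) + X i ^ (-((α j : ℤ) + r))) +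
          (fun i : Fin n => X i ^ ((α j : ℤ) - r) + X i ^ (-((α j : ℤ) - r))) := by
      funext i
      simpa using mul_entry i ((α j : ℤ)) r
    rw [hcol, Matrix.det_updateCol_add, det_updateCol_N, det_updateCol_N]
  have hsum := sum_det_updateCol_mul
      (Matrix.of fun i k : Fin n => X i ^ ((α k : ℤ)) + X i ^ (-(α k : ℤ)))
      (fun i => X i ^ r + X i ^ (-r))
  rw [show N n (fun j => (α j : ℤ)) =
      (Matrix.of fun i k : Fin n => X i ^ ((α k : ℤ)) + X i ^ (-(α k : ℤ))).det from rfl,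
    ← hsum, Finset.sum_congr rfl fun j _ => key j, Finset.sum_add_distrib]
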